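/- Fix a Newton diagram datum: an integer n ≥ 1 and lattice points (P₀,Q₀),…,(Pₙ,Qₙ) ∈ ℤ² with P₀ = 0, Qₙ = 0, P₀ < P₁ < … < Pₙ, Q₀ > Q₁ > … > Qₙ, pᵢ = Pᵢ − Pᵢ₋₁, qᵢ = Qᵢ₋₁ − Qᵢ, q₁/p₁ > … > qₙ/pₙ, and gcd(pᵢ,qᵢ) = 1 for each i. Let Γ₋ be the closure of (ℝ≥0)² \ (conv{(P₀,Q₀),…,(Pₙ,Qₙ)} + (ℝ≥0)²), and let Γ be the union of the segments from (Pᵢ₋₁,Qᵢ₋₁) to (Pᵢ,Qᵢ), i = 1,…,n. Then the number of pairs (i,j) of nonnegative integers such that S(i,j) = [i,i+1] × [j,j+1] ⊆ Γ₋ and at least one vertex of S(i,j) lies on Γ equals n − 1. -/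

import Mathlib

open Set MeasureTheory Pointwise

/-- The unit lattice square `S(i,j) = [i,i+1] × [j,j+1] ⊆ ℝ²`. -/
def unitSq (i j : ℤ) : Set (ℝ × ℝ) :=
  Set.Icc (i : ℝ) (i + 1) ×ˢ Set.Icc (j : ℝ) (j + 1)

/-- The four corners of the unit lattice square `S(i,j)`. -/
def unitSqVertices (i j : ℤ) : Set (ℝ × ℝ) :=
  {((i : ℝ), (j : ℝ)), ((i : ℝ) + 1, (j : ℝ)), ((i : ℝ), (j : ℝ) + 1),
    ((i : ℝ) + 1, (j : ℝ) + 1)}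

/-- The region `Γ₋`: the closure of `(ℝ≥0)² \ (conv{(P₀,Q₀),…,(Pₙ,Qₙ)} + (ℝ≥0)²)`,
where `+` denotes the Minkowski sum. -/
def gammaMinus (n : ℕ) (P Q : ℕ → ℤ) : Set (ℝ × ℝ) :=
  closure ((Set.Ici (0 : ℝ) ×ˢ Set.Ici (0 : ℝ)) \
    (convexHull ℝ {x : ℝ × ℝ | ∃ i ≤ n, x = ((P i : ℝ), (Q i : ℝ))} +
      Set.Ici (0 : ℝ) ×ˢ Set.Ici (0 : ℝ)))

/-- The Newton boundary `Γ`: the union of the segments from `(Pᵢ₋₁,Qᵢ₋₁)` to `(Pᵢ,Qᵢ)`,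
`i = 1,…,n`. -/
def newtonBoundary (n : ℕ) (P Q : ℕ → ℤ) : Set (ℝ × ℝ) :=
  ⋃ i ∈ Finset.Icc 1 n,
    segment ℝ ((P (i - 1) : ℝ), (Q (i - 1) : ℝ)) ((P i : ℝ), (Q i : ℝ))

namespace NA

theorem P_lt (n : ℕ) (P : ℕ → ℤ) (h : ∀ i < n, P i < P (i + 1)) :
    ∀ a b, a < b → b ≤ n → P a < P b := by
  intro a b hab hbn
  induction b with
  | zero => omega
  | succ m ih =>
    rcases Nat.lt_succ_iff_lt_or_eq.mp hab with h' | h'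
    · exact (ih h' (by omega)).trans (h m (by omega))
    · subst h'; exact h a (by omega)

theorem P_le (n : ℕ) (P : ℕ → ℤ) (h : ∀ i < n, P i < P (i + 1)) :
    ∀ a b, a ≤ b → b ≤ n → P a ≤ P b := by
  intro a b hab hbn
  rcases eq_or_lt_of_le hab with rfl | h'
  · exact le_refl _
  · exact (P_lt n P h a b h' hbn).le

end NA

namespace NA2
variable (n : ℕ) (P Q : ℕ → ℤ)

theorem Q_lt (h : ∀ i < n, Q (i + 1) < Q i) :
    ∀ a b, a < b → b ≤ n → Q b < Q a := by
  intro a b hab hbn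
  have := NA.P_lt n (fun i => -Q i) (fun i hi => by simpa using h i hi) a b hab hbn
  simpa using this

theorem p_pos (hPmono : ∀ i < n, P i < P (i + 1)) :
    ∀ k, 1 ≤ k → k ≤ n → 0 < P k - P (k - 1) := by
  intro k h1 h2
  have : P (k-1) < P (k-1+1) := hPmono (k-1) (by omega)
  have e : k - 1 + 1 = k := by omega
  rw [e] at this; omega

theorem q_pos (hQmono : ∀ i < n, Q (i + 1) < Q i) :
    ∀ k, 1 ≤ k → k ≤ n → 0 < Q (k - 1) - Q k := by
  intro k h1 h2
  have : Q (k-1+1) < Q (k-1) := hQmono (k-1) (by omega)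
  have e : k - 1 + 1 = k := by omega
  rw [e] at this; omega

theorem slope_chain
    (hconv : ∀ i, 1 ≤ i → i < n →
      ((Q (i - 1) - Q i : ℤ) : ℚ) / ((P i - P (i - 1) : ℤ) : ℚ) >
        ((Q i - Q (i + 1) : ℤ) : ℚ) / ((P (i + 1) - P i : ℤ) : ℚ)) :
    ∀ a b, 1 ≤ a → a < b → b ≤ n →
      ((Q (b - 1) - Q b : ℤ) : ℚ) / ((P b - P (b - 1) : ℤ) : ℚ) <
        ((Q (a - 1) - Q a : ℤ) : ℚ) / ((P a - P (a - 1) : ℤ) : ℚ) := by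
  intro a b ha hab hbn
  induction b with
  | zero => omega
  | succ m ih =>
    rcases Nat.lt_succ_iff_lt_or_eq.mp hab with h' | h'
    · have h1 := ih h' (by omega)
      have h2 := hconv m (by omega) (by omega)
      have e : m + 1 - 1 = m := by omega
      rw [e]
      calc ((Q m - Q (m+1) : ℤ) : ℚ) / ((P (m+1) - P m : ℤ) : ℚ)
          < ((Q (m-1) - Q m : ℤ) : ℚ) / ((P m - P (m-1) : ℤ) : ℚ) := h2
        _ < _ := h1
    · subst h'
      have h2 := hconv a (by omega) (by omega)
      have e : a + 1 - 1 = a := by omega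
      rw [e]
      exact h2

theorem slope_lt (hPmono : ∀ i < n, P i < P (i + 1))
    (hconv : ∀ i, 1 ≤ i → i < n →
      ((Q (i - 1) - Q i : ℤ) : ℚ) / ((P i - P (i - 1) : ℤ) : ℚ) >
        ((Q i - Q (i + 1) : ℤ) : ℚ) / ((P (i + 1) - P i : ℤ) : ℚ)) :
    ∀ a b, 1 ≤ a → a < b → b ≤ n →
      (Q (b - 1) - Q b) * (P a - P (a - 1)) < (Q (a - 1) - Q a) * (P b - P (b - 1)) := by
  intro a b ha hab hbn
  have h := slope_chain n P Q hconv a b ha hab hbn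
  have hpa : (0:ℚ) < ((P a - P (a-1) : ℤ) : ℚ) := by
    exact_mod_cast p_pos n P hPmono a (by omega) (by omega)
  have hpb : (0:ℚ) < ((P b - P (b-1) : ℤ) : ℚ) := by
    exact_mod_cast p_pos n P hPmono b (by omega) (by omega)
  rw [div_lt_div_iff₀ hpb hpa] at h
  exact_mod_cast h

end NA2

namespace NA3
variable (n : ℕ) (P Q : ℕ → ℤ)

def LL (j m : ℕ) : ℤ := (Q (j-1) - Q j) * P m + (P j - P (j-1)) * Q m

theorem LL_eq_left (j : ℕ) : LL P Q j (j-1) = LL P Q j j := by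
  simp only [LL]; ring

theorem key_down (hPmono : ∀ i < n, P i < P (i + 1))
    (hconv : ∀ i, 1 ≤ i → i < n →
      ((Q (i - 1) - Q i : ℤ) : ℚ) / ((P i - P (i - 1) : ℤ) : ℚ) >
        ((Q i - Q (i + 1) : ℤ) : ℚ) / ((P (i + 1) - P i : ℤ) : ℚ))
    (j : ℕ) (hjn : j ≤ n) :
    ∀ k, k + 1 ≤ j → LL P Q j j ≤ LL P Q j (j - 1 - k) := by
  intro k
  induction k with
  | zero => intro _; simpa using (LL_eq_left P Q j).ge
  | succ k ih =>
    intro hk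
    have ih' := ih (by omega)
    have h1 : j - 1 - (k+1) + 1 = j - 1 - k := by omega
    set m' := j - 1 - (k+1) with hm'
    have hs := NA2.slope_lt n P Q hPmono hconv (m'+1) j (by omega) (by omega) hjn
    simp only [Nat.add_sub_cancel] at hs
    rw [← h1] at ih'
    simp only [LL] at ih' ⊢
    nlinarith [hs, ih']

theorem key_up (hPmono : ∀ i < n, P i < P (i + 1))
    (hconv : ∀ i, 1 ≤ i → i < n →
      ((Q (i - 1) - Q i : ℤ) : ℚ) / ((P i - P (i - 1) : ℤ) : ℚ) >
        ((Q i - Q (i + 1) : ℤ) : ℚ) / ((P (i + 1) - P i : ℤ) : ℚ))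
    (j : ℕ) (hj1 : 1 ≤ j) :
    ∀ k, j + k ≤ n → LL P Q j j ≤ LL P Q j (j + k) := by
  intro k
  induction k with
  | zero => intro _; simp
  | succ k ih =>
    intro hk
    have ih' := ih (by omega)
    have hs := NA2.slope_lt n P Q hPmono hconv j (j+k+1) hj1 (by omega) (by omega)
    simp only [Nat.add_sub_cancel] at hs
    have e : j + (k+1) = (j + k) + 1 := by omega
    rw [e]
    simp only [LL] at ih' ⊢
    nlinarith [hs, ih']

theorem key (hPmono : ∀ i < n, P i < P (i + 1))
    (hconv : ∀ i, 1 ≤ i → i < n →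
      ((Q (i - 1) - Q i : ℤ) : ℚ) / ((P i - P (i - 1) : ℤ) : ℚ) >
        ((Q i - Q (i + 1) : ℤ) : ℚ) / ((P (i + 1) - P i : ℤ) : ℚ))
    (j m : ℕ) (hj1 : 1 ≤ j) (hjn : j ≤ n) (hmn : m ≤ n) :
    LL P Q j j ≤ LL P Q j m := by
  rcases lt_or_ge m j with h | h
  · have := key_down n P Q hPmono hconv j hjn (j - 1 - m) (by omega)
    have e : j - 1 - (j - 1 - m) = m := by omega
    rwa [e] at this
  · have := key_up n P Q hPmono hconv j hj1 (m - j) (by omega)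
    have e : j + (m - j) = m := by omega
    rwa [e] at this

end NA3

namespace NA4
open Set Pointwise
variable (n : ℕ) (P Q : ℕ → ℤ)

def quad : Set (ℝ × ℝ) := Set.Ici (0:ℝ) ×ˢ Set.Ici (0:ℝ)

def V : Set (ℝ × ℝ) := {x : ℝ × ℝ | ∃ i ≤ n, x = ((P i : ℝ), (Q i : ℝ))}

def U : Set (ℝ × ℝ) := convexHull ℝ (V n P Q) + quad

theorem U_subset_half (hPmono : ∀ i < n, P i < P (i + 1))
    (hQmono : ∀ i < n, Q (i + 1) < Q i)
    (hconv : ∀ i, 1 ≤ i → i < n →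
      ((Q (i - 1) - Q i : ℤ) : ℚ) / ((P i - P (i - 1) : ℤ) : ℚ) >
        ((Q i - Q (i + 1) : ℤ) : ℚ) / ((P (i + 1) - P i : ℤ) : ℚ))
    (j : ℕ) (hj1 : 1 ≤ j) (hjn : j ≤ n) :
    ∀ x ∈ U n P Q, ((NA3.LL P Q j j : ℤ) : ℝ) ≤
      ((Q (j-1) - Q j : ℤ) : ℝ) * x.1 + ((P j - P (j-1) : ℤ) : ℝ) * x.2 := by
  have hqr0 : (0:ℝ) ≤ ((Q (j-1) - Q j : ℤ) : ℝ) := by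
    exact_mod_cast (NA2.q_pos n Q hQmono j hj1 hjn).le
  have hpr0 : (0:ℝ) ≤ ((P j - P (j-1) : ℤ) : ℝ) := by
    exact_mod_cast (NA2.p_pos n P hPmono j hj1 hjn).le
  have hhull : convexHull ℝ (V n P Q) ⊆ {x : ℝ × ℝ | ((NA3.LL P Q j j : ℤ) : ℝ) ≤
      ((Q (j-1) - Q j : ℤ) : ℝ) * x.1 + ((P j - P (j-1) : ℤ) : ℝ) * x.2} := by
    apply convexHull_min
    · rintro _ ⟨i, hi, rfl⟩
      have hk : ((NA3.LL P Q j j : ℤ) : ℝ) ≤ ((NA3.LL P Q j i : ℤ) : ℝ) := by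
        exact_mod_cast NA3.key n P Q hPmono hconv j i hj1 hjn hi
      have e : ((Q (j-1) - Q j : ℤ) : ℝ) * ((P i : ℤ) : ℝ) +
          ((P j - P (j-1) : ℤ) : ℝ) * ((Q i : ℤ) : ℝ) = ((NA3.LL P Q j i : ℤ) : ℝ) := by
        simp only [NA3.LL]; push_cast; ring
      simp only [Set.mem_setOf_eq]
      rw [e]; exact hk
    · intro x hx y hy a b ha hb hab
      simp only [Set.mem_setOf_eq] at hx hy ⊢
      simp only [Prod.fst_add, Prod.snd_add, Prod.smul_fst, Prod.smul_snd, smul_eq_mul]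
      have h1 := mul_le_mul_of_nonneg_left hx ha
      have h2 := mul_le_mul_of_nonneg_left hy hb
      have h3 : a * ((NA3.LL P Q j j : ℤ) : ℝ) + b * ((NA3.LL P Q j j : ℤ) : ℝ) =
          ((NA3.LL P Q j j : ℤ) : ℝ) := by rw [← add_mul, hab, one_mul]
      nlinarith [h1, h2, h3]
  rintro x hx
  rcases Set.mem_add.mp hx with ⟨u, hu, v, hv, rfl⟩
  have h1 := hhull hu
  simp only [Set.mem_setOf_eq] at h1
  rcases hv with ⟨hv1, hv2⟩
  simp only [Set.mem_Ici] at hv1 hv2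
  simp only [Prod.fst_add, Prod.snd_add]
  nlinarith

def Cset : Set (ℝ × ℝ) := quad ∩ ⋃ j ∈ Finset.Icc 1 n,
  {x : ℝ × ℝ | ((Q (j-1) - Q j : ℤ) : ℝ) * x.1 + ((P j - P (j-1) : ℤ) : ℝ) * x.2 ≤
    ((NA3.LL P Q j j : ℤ) : ℝ)}

theorem Cset_closed : IsClosed (Cset n P Q) := by
  apply IsClosed.inter
  · exact (isClosed_Ici.prod isClosed_Ici)
  · apply Set.Finite.isClosed_biUnion (Finset.Icc 1 n).finite_toSet
    intro j _
    exact isClosed_le (by fun_prop) continuous_const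

theorem exists_k (hn : 1 ≤ n) (hP0 : P 0 = 0) (hPmono : ∀ i < n, P i < P (i + 1)) :
    ∀ m, m ≤ n → ∀ x : ℝ, 0 ≤ x → x ≤ ((P m : ℤ) : ℝ) →
      ∃ k, 1 ≤ k ∧ k ≤ n ∧ ((P (k-1) : ℤ) : ℝ) ≤ x ∧ x ≤ ((P k : ℤ) : ℝ) := by
  intro m
  induction m with
  | zero =>
    intro hmn x hx0 hxP
    refine ⟨1, le_refl 1, hn, ?_, ?_⟩
    · simpa [hP0] using hx0
    · have h1 : (0:ℤ) < P 1 := by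
        simpa [hP0] using hPmono 0 hn
      have hx : x ≤ 0 := by
        rw [hP0] at hxP; simpa using hxP
      have : (0:ℝ) ≤ ((P 1 : ℤ) : ℝ) := by exact_mod_cast h1.le
      linarith
  | succ m ih =>
    intro hmn x hx0 hxP
    by_cases h : x ≤ ((P m : ℤ) : ℝ)
    · exact ih (by omega) x hx0 h
    · exact ⟨m + 1, by omega, hmn, by simpa using (le_of_not_ge h), hxP⟩

end NA4

namespace NA5
open Set Pointwise NA4
variable (n : ℕ) (P Q : ℕ → ℤ)

theorem diff_subset_Cset (hn : 1 ≤ n) (hP0 : P 0 = 0) (hQn : Q n = 0)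
    (hPmono : ∀ i < n, P i < P (i + 1))
    (hQmono : ∀ i < n, Q (i + 1) < Q i) :
    quad \ U n P Q ⊆ Cset n P Q := by
  rintro x ⟨hxq, hxU⟩
  by_contra hxC
  apply hxU
  have hall : ∀ j, 1 ≤ j → j ≤ n → ((NA3.LL P Q j j : ℤ) : ℝ) <
      ((Q (j-1) - Q j : ℤ) : ℝ) * x.1 + ((P j - P (j-1) : ℤ) : ℝ) * x.2 := by
    intro j h1 h2
    by_contra hle
    push_neg at hle
    exact hxC ⟨hxq, Set.mem_iUnion₂.mpr ⟨j, Finset.mem_Icc.mpr ⟨h1, h2⟩, hle⟩⟩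
  rcases hxq with ⟨hx1, hx2⟩
  simp only [Set.mem_Ici] at hx1 hx2
  by_cases hbig : ((P n : ℤ) : ℝ) ≤ x.1
  · have hA : (((P n : ℤ) : ℝ), (0 : ℝ)) ∈ convexHull ℝ (V n P Q) := by
      apply subset_convexHull
      exact ⟨n, le_refl n, by rw [hQn]; norm_num⟩
    have hx : x = (((P n : ℤ) : ℝ), (0 : ℝ)) + (x.1 - ((P n : ℤ) : ℝ), x.2) := by
      apply Prod.ext <;> simp
    rw [hx]
    exact Set.add_mem_add hA ⟨by simpa using hbig, by simpa using hx2⟩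
  · obtain ⟨k, hk1, hkn, hPk1, hPk⟩ :=
      NA4.exists_k n P hn hP0 hPmono n (le_refl n) x.1 hx1 (le_of_not_ge hbig)
    have hpk : (0:ℝ) < ((P k : ℤ) : ℝ) - ((P (k-1) : ℤ) : ℝ) := by
      have := NA2.p_pos n P hPmono k hk1 hkn
      have : ((0:ℤ):ℝ) < ((P k - P (k-1) : ℤ) : ℝ) := by exact_mod_cast this
      push_cast at this; linarith
    set t : ℝ := (x.1 - ((P (k-1) : ℤ) : ℝ)) / (((P k : ℤ) : ℝ) - ((P (k-1) : ℤ) : ℝ)) with hts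
    have ht0 : 0 ≤ t := div_nonneg (by linarith) hpk.le
    have ht1 : t ≤ 1 := by
      rw [hts, div_le_one hpk]; linarith
    have htp : t * (((P k : ℤ) : ℝ) - ((P (k-1) : ℤ) : ℝ)) = x.1 - ((P (k-1) : ℤ) : ℝ) := by
      rw [hts]; field_simp
    set y0 : ℝ := (1-t) * ((Q (k-1) : ℤ) : ℝ) + t * ((Q k : ℤ) : ℝ) with hy0
    have hA : (((P (k-1) : ℤ) : ℝ), ((Q (k-1) : ℤ) : ℝ)) ∈ V n P Q := ⟨k-1, by omega, rfl⟩
    have hB : (((P k : ℤ) : ℝ), ((Q k : ℤ) : ℝ)) ∈ V n P Q := ⟨k, hkn, rfl⟩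
    have hm : (x.1, y0) ∈ convexHull ℝ (V n P Q) := by
      have := (convex_convexHull ℝ (V n P Q))
        (subset_convexHull ℝ _ hA) (subset_convexHull ℝ _ hB)
        (by linarith : (0:ℝ) ≤ 1 - t) ht0 (by ring)
      convert this using 1
      apply Prod.ext
      · simp only [Prod.fst_add, Prod.smul_fst, smul_eq_mul]
        linarith [htp]
      · simp [hy0]
    -- the line value at (x.1, y0) equals c_k
    have e1 : ((Q (k-1) - Q k : ℤ) : ℝ) * ((P (k-1) : ℤ) : ℝ) +
        ((P k - P (k-1) : ℤ) : ℝ) * ((Q (k-1) : ℤ) : ℝ) = ((NA3.LL P Q k k : ℤ) : ℝ) := by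
      rw [← NA3.LL_eq_left]; simp only [NA3.LL]; push_cast; ring
    have e2 : ((Q (k-1) - Q k : ℤ) : ℝ) * ((P k : ℤ) : ℝ) +
        ((P k - P (k-1) : ℤ) : ℝ) * ((Q k : ℤ) : ℝ) = ((NA3.LL P Q k k : ℤ) : ℝ) := by
      simp only [NA3.LL]; push_cast; ring
    have hline : ((Q (k-1) - Q k : ℤ) : ℝ) * x.1 + ((P k - P (k-1) : ℤ) : ℝ) * y0 =
        ((NA3.LL P Q k k : ℤ) : ℝ) := by
      have hx1e : x.1 = (1-t) * ((P (k-1) : ℤ) : ℝ) + t * ((P k : ℤ) : ℝ) := by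
        linarith [htp]
      rw [hx1e, hy0]
      linear_combination (1-t) * e1 + t * e2
    have hy0le : y0 ≤ x.2 := by
      have hk := hall k hk1 hkn
      have hpr : (0:ℝ) < ((P k - P (k-1) : ℤ) : ℝ) := by push_cast; linarith
      nlinarith [hk, hline]
    have hx : x = (x.1, y0) + ((0:ℝ), x.2 - y0) := by
      apply Prod.ext <;> simp
    rw [hx]
    exact Set.add_mem_add hm ⟨by simp, by simp [hy0le]⟩

theorem gamma_sub_Cset (hn : 1 ≤ n) (hP0 : P 0 = 0) (hQn : Q n = 0)
    (hPmono : ∀ i < n, P i < P (i + 1))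
    (hQmono : ∀ i < n, Q (i + 1) < Q i) :
    gammaMinus n P Q ⊆ Cset n P Q := by
  have h1 : gammaMinus n P Q = closure (quad \ U n P Q) := rfl
  rw [h1]
  exact closure_minimal (diff_subset_Cset n P Q hn hP0 hQn hPmono hQmono)
    (Cset_closed n P Q)

end NA5

namespace NA6
open Set Pointwise NA4
variable (n : ℕ) (P Q : ℕ → ℤ)

theorem square_subset (hn : 1 ≤ n) (hP0 : P 0 = 0) (hQn : Q n = 0)
    (hPmono : ∀ i < n, P i < P (i + 1))
    (hQmono : ∀ i < n, Q (i + 1) < Q i)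
    (hconv : ∀ i, 1 ≤ i → i < n →
      ((Q (i - 1) - Q i : ℤ) : ℚ) / ((P i - P (i - 1) : ℤ) : ℚ) >
        ((Q i - Q (i + 1) : ℤ) : ℚ) / ((P (i + 1) - P i : ℤ) : ℚ))
    (s : ℕ) (hs1 : 1 ≤ s) (hsn : s < n) :
    unitSq (P s - 1) (Q s - 1) ⊆ gammaMinus n P Q := by
  have hPs : 1 ≤ P s := by
    have := NA.P_lt n P hPmono 0 s hs1 (by omega)
    omega
  have hQs : 1 ≤ Q s := by
    have := NA2.Q_lt n Q hQmono s n hsn (le_refl n)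
    omega
  set a : ℝ × ℝ := (((P s : ℤ) : ℝ), ((Q s : ℤ) : ℝ)) with ha
  have hsub : unitSq (P s - 1) (Q s - 1) \ {a} ⊆ quad \ U n P Q := by
    rintro x ⟨hx, hxa⟩
    rcases hx with ⟨hx1, hx2⟩
    simp only [Set.mem_Icc] at hx1 hx2
    push_cast at hx1 hx2
    constructor
    · constructor <;> simp only [Set.mem_Ici]
      · have : (1:ℝ) ≤ ((P s : ℤ) : ℝ) := by exact_mod_cast hPs
        linarith [hx1.1]
      · have : (1:ℝ) ≤ ((Q s : ℤ) : ℝ) := by exact_mod_cast hQs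
        linarith [hx2.1]
    · intro hxU
      have hU := NA4.U_subset_half n P Q hPmono hQmono hconv (s+1) (by omega)
        (by omega) x hxU
      simp only [Nat.add_sub_cancel] at hU
      have hq : (0:ℤ) < Q s - Q (s+1) := by
        have := NA2.q_pos n Q hQmono (s+1) (by omega) (by omega)
        simpa using this
      have hp : (0:ℤ) < P (s+1) - P s := by
        have := NA2.p_pos n P hPmono (s+1) (by omega) (by omega)
        simpa using this
      have hqr : (0:ℝ) < ((Q s - Q (s+1) : ℤ) : ℝ) := by exact_mod_cast hq
      have hpr : (0:ℝ) < ((P (s+1) - P s : ℤ) : ℝ) := by exact_mod_cast hp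
      -- c_{s+1} = value at (P s, Q s)
      have e1 : ((Q s - Q (s+1) : ℤ) : ℝ) * ((P s : ℤ) : ℝ) +
          ((P (s+1) - P s : ℤ) : ℝ) * ((Q s : ℤ) : ℝ) =
          ((NA3.LL P Q (s+1) (s+1) : ℤ) : ℝ) := by
        have h := NA3.LL_eq_left P Q (s+1)
        simp only [Nat.add_sub_cancel, NA3.LL] at h ⊢
        exact_mod_cast h
      -- x ≠ a and x ≤ a componentwise
      have hne : x.1 ≠ ((P s : ℤ) : ℝ) ∨ x.2 ≠ ((Q s : ℤ) : ℝ) := by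
        by_contra hc
        push_neg at hc
        exact hxa (by rw [ha]; exact Prod.ext hc.1 hc.2)
      have hlt : ((Q s - Q (s+1) : ℤ) : ℝ) * x.1 + ((P (s+1) - P s : ℤ) : ℝ) * x.2 <
          ((NA3.LL P Q (s+1) (s+1) : ℤ) : ℝ) := by
        rw [← e1]
        rcases hne with h | h
        · have h1 : x.1 < ((P s : ℤ) : ℝ) := lt_of_le_of_ne (by push_cast at hx1 ⊢; linarith [hx1.2]) h
          nlinarith [hx2.2, hqr, hpr, h1]
        · have h2 : x.2 < ((Q s : ℤ) : ℝ) := lt_of_le_of_ne (by push_cast at hx2 ⊢; linarith [hx2.2]) h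
          nlinarith [hx1.2, hqr, hpr, h2]
      linarith [hU, hlt]
  have hacl : a ∈ closure (unitSq (P s - 1) (Q s - 1) \ {a}) := by
    rw [mem_closure_iff_seq_limit]
    refine ⟨fun m => (((P s : ℤ) : ℝ) - 1/(m+1), ((Q s : ℤ) : ℝ) - 1/(m+1)), ?_, ?_⟩
    · intro m
      have h0 : (0:ℝ) < 1/((m:ℝ)+1) := by positivity
      have h1 : 1/((m:ℝ)+1) ≤ 1 := by
        rw [div_le_one (by positivity)]; simp
      constructor
      · constructor <;> simp only [Set.mem_Icc] <;> push_cast <;> constructor <;> linarith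
      · simp only [Set.mem_singleton_iff, ha]
        intro hc
        have := congrArg Prod.fst hc
        simp at this
        linarith
    · apply Filter.Tendsto.prodMk_nhds
      · have := tendsto_one_div_add_atTop_nhds_zero_nat (𝕜 := ℝ)
        simpa using (tendsto_const_nhds.sub this)
      · have := tendsto_one_div_add_atTop_nhds_zero_nat (𝕜 := ℝ)
        simpa using (tendsto_const_nhds.sub this)
  intro x hx
  by_cases hxa : x = a
  · rw [hxa]
    exact closure_mono hsub hacl
  · exact subset_closure (hsub ⟨hx, hxa⟩)

end NA6

namespace NA7
open Set
variable (n : ℕ) (P Q : ℕ → ℤ)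

theorem lattice_on_segment (hPmono : ∀ i < n, P i < P (i + 1))
    (hgcd : ∀ i, 1 ≤ i → i ≤ n → Int.gcd (P i - P (i - 1)) (Q (i - 1) - Q i) = 1)
    (k : ℕ) (hk1 : 1 ≤ k) (hkn : k ≤ n) (a b : ℤ)
    (hmem : ((a : ℝ), (b : ℝ)) ∈
      segment ℝ (((P (k-1) : ℤ) : ℝ), ((Q (k-1) : ℤ) : ℝ)) (((P k : ℤ) : ℝ), ((Q k : ℤ) : ℝ))) :
    (a = P (k-1) ∧ b = Q (k-1)) ∨ (a = P k ∧ b = Q k) := by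
  rcases hmem with ⟨u, v, hu, hv, huv, heq⟩
  have h1 : u * ((P (k-1) : ℤ) : ℝ) + v * ((P k : ℤ) : ℝ) = (a : ℝ) := by
    have := congrArg Prod.fst heq
    simpa using this
  have h2 : u * ((Q (k-1) : ℤ) : ℝ) + v * ((Q k : ℤ) : ℝ) = (b : ℝ) := by
    have := congrArg Prod.snd heq
    simpa using this
  have hppos : 0 < P k - P (k-1) := NA2.p_pos n P hPmono k hk1 hkn
  have hPleR : ((P (k-1) : ℤ) : ℝ) ≤ ((P k : ℤ) : ℝ) := by exact_mod_cast by omega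
  have key1 : (a : ℝ) - ((P (k-1) : ℤ) : ℝ) = v * (((P k : ℤ) : ℝ) - ((P (k-1) : ℤ) : ℝ)) := by
    linear_combination (-1 : ℝ) * h1 + ((P (k-1) : ℤ) : ℝ) * huv
  have key2 : ((P k : ℤ) : ℝ) - (a : ℝ) = u * (((P k : ℤ) : ℝ) - ((P (k-1) : ℤ) : ℝ)) := by
    linear_combination h1 - ((P k : ℤ) : ℝ) * huv
  have ha1 : P (k-1) ≤ a := by
    have : ((P (k-1) : ℤ) : ℝ) ≤ (a : ℝ) := by
      nlinarith [mul_nonneg hv (sub_nonneg.mpr hPleR)]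
    exact_mod_cast this
  have ha2 : a ≤ P k := by
    have : (a : ℝ) ≤ ((P k : ℤ) : ℝ) := by
      nlinarith [mul_nonneg hu (sub_nonneg.mpr hPleR)]
    exact_mod_cast this
  have e1 : ((Q (k-1) - Q k : ℤ) : ℝ) * ((P (k-1) : ℤ) : ℝ) +
      ((P k - P (k-1) : ℤ) : ℝ) * ((Q (k-1) : ℤ) : ℝ) = ((NA3.LL P Q k k : ℤ) : ℝ) := by
    rw [← NA3.LL_eq_left]; simp only [NA3.LL]; push_cast; ring
  have e2 : ((Q (k-1) - Q k : ℤ) : ℝ) * ((P k : ℤ) : ℝ) +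
      ((P k - P (k-1) : ℤ) : ℝ) * ((Q k : ℤ) : ℝ) = ((NA3.LL P Q k k : ℤ) : ℝ) := by
    simp only [NA3.LL]; push_cast; ring
  have hlineR : ((Q (k-1) - Q k : ℤ) : ℝ) * (a : ℝ) + ((P k - P (k-1) : ℤ) : ℝ) * (b : ℝ) =
      ((NA3.LL P Q k k : ℤ) : ℝ) := by
    rw [← h1, ← h2]
    linear_combination u * e1 + v * e2 + ((NA3.LL P Q k k : ℤ) : ℝ) * huv
  have hline : (Q (k-1) - Q k) * a + (P k - P (k-1)) * b = NA3.LL P Q k k := by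
    exact_mod_cast hlineR
  have hq : (Q (k-1) - Q k) * (a - P (k-1)) = (P k - P (k-1)) * (Q (k-1) - b) := by
    have h := NA3.LL_eq_left P Q k
    simp only [NA3.LL] at h hline
    linear_combination hline - h
  have hco : IsCoprime (P k - P (k-1)) (Q (k-1) - Q k) :=
    Int.isCoprime_iff_gcd_eq_one.mpr (hgcd k hk1 hkn)
  have hdvd : (P k - P (k-1)) ∣ (a - P (k-1)) := by
    apply hco.dvd_of_dvd_mul_right
    exact ⟨Q (k-1) - b, by linarith [hq]⟩
  rcases hdvd with ⟨e, he⟩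
  have he0 : e = 0 ∨ e = 1 := by
    have h1' : (P k - P (k-1)) * 0 ≤ (P k - P (k-1)) * e := by
      rw [mul_zero, ← he]; omega
    have h2' : (P k - P (k-1)) * e ≤ (P k - P (k-1)) * 1 := by
      rw [mul_one, ← he]; omega
    have he1 : (0:ℤ) ≤ e := le_of_mul_le_mul_left h1' hppos
    have he2 : e ≤ 1 := le_of_mul_le_mul_left h2' hppos
    omega
  rcases he0 with rfl | rfl
  · left
    have ha : a = P (k-1) := by omega
    refine ⟨ha, ?_⟩
    subst ha
    have : (P k - P (k-1)) * (Q (k-1) - b) = 0 := by linarith [hq]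
    have := mul_eq_zero.mp this
    omega
  · right
    have ha : a = P k := by omega
    refine ⟨ha, ?_⟩
    subst ha
    have : (P k - P (k-1)) * (Q (k-1) - b) = (P k - P (k-1)) * (Q (k-1) - Q k) := by
      linear_combination -hq
    have := mul_left_cancel₀ (by omega : P k - P (k-1) ≠ 0) this
    omega

end NA7

namespace NA8
open Set Pointwise
variable (n : ℕ) (P Q : ℕ → ℤ)

theorem partB (hn : 1 ≤ n) (hP0 : P 0 = 0) (hQn : Q n = 0)
    (hPmono : ∀ i < n, P i < P (i + 1))
    (hQmono : ∀ i < n, Q (i + 1) < Q i)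
    (hconv : ∀ i, 1 ≤ i → i < n →
      ((Q (i - 1) - Q i : ℤ) : ℚ) / ((P i - P (i - 1) : ℤ) : ℚ) >
        ((Q i - Q (i + 1) : ℤ) : ℚ) / ((P (i + 1) - P i : ℤ) : ℚ))
    (hgcd : ∀ i, 1 ≤ i → i ≤ n → Int.gcd (P i - P (i - 1)) (Q (i - 1) - Q i) = 1)
    (i j : ℕ) (hsq : unitSq (i : ℤ) (j : ℤ) ⊆ gammaMinus n P Q)
    (hv : (unitSqVertices (i : ℤ) (j : ℤ) ∩ newtonBoundary n P Q).Nonempty) :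
    ∃ s, 1 ≤ s ∧ s ≤ n - 1 ∧ (i : ℤ) = P s - 1 ∧ (j : ℤ) = Q s - 1 := by
  -- the corner is in Cset
  have hcornerSq : ((((i:ℤ)):ℝ) + 1, (((j:ℤ)):ℝ) + 1) ∈ unitSq (i:ℤ) (j:ℤ) := by
    constructor <;> simp [Set.mem_Icc]
  have hcornerC := NA5.gamma_sub_Cset n P Q hn hP0 hQn hPmono hQmono (hsq hcornerSq)
  obtain ⟨-, hUmem⟩ := hcornerC
  rw [Set.mem_iUnion₂] at hUmem
  obtain ⟨k, hk, hle⟩ := hUmem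
  rw [Finset.mem_Icc] at hk
  simp only [Set.mem_setOf_eq] at hle
  have hleZ : (Q (k-1) - Q k) * ((i:ℤ)+1) + (P k - P (k-1)) * ((j:ℤ)+1) ≤
      NA3.LL P Q k k := by
    have : (((Q (k-1) - Q k) * ((i:ℤ)+1) + (P k - P (k-1)) * ((j:ℤ)+1) : ℤ) : ℝ) ≤
        ((NA3.LL P Q k k : ℤ) : ℝ) := by push_cast; push_cast at hle; linarith
    exact_mod_cast this
  -- the vertex on the boundary is a lattice point, hence an endpoint
  obtain ⟨v, hvV, hvB⟩ := hv
  simp only [newtonBoundary, Set.mem_iUnion] at hvB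
  obtain ⟨m, hm, hseg⟩ := hvB
  rw [Finset.mem_Icc] at hm
  obtain ⟨a, b, hab, hia, hjb⟩ : ∃ a b : ℤ, v = ((a : ℝ), (b : ℝ)) ∧
      (a = (i:ℤ) ∨ a = (i:ℤ)+1) ∧ (b = (j:ℤ) ∨ b = (j:ℤ)+1) := by
    simp only [unitSqVertices, Set.mem_insert_iff, Set.mem_singleton_iff] at hvV
    rcases hvV with h | h | h | h
    · exact ⟨(i:ℤ), (j:ℤ), by rw [h], Or.inl rfl, Or.inl rfl⟩
    · exact ⟨(i:ℤ)+1, (j:ℤ), by rw [h]; push_cast; rfl, Or.inr rfl, Or.inl rfl⟩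
    · exact ⟨(i:ℤ), (j:ℤ)+1, by rw [h]; push_cast; rfl, Or.inl rfl, Or.inr rfl⟩
    · exact ⟨(i:ℤ)+1, (j:ℤ)+1, by rw [h]; push_cast; rfl, Or.inr rfl, Or.inr rfl⟩
  rw [hab] at hseg
  have hlat := NA7.lattice_on_segment n P Q hPmono hgcd m hm.1 hm.2 a b hseg
  obtain ⟨s, hsn, ha, hb⟩ : ∃ s, s ≤ n ∧ a = P s ∧ b = Q s := by
    rcases hlat with ⟨h1, h2⟩ | ⟨h1, h2⟩
    · exact ⟨m - 1, by omega, h1, h2⟩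
    · exact ⟨m, hm.2, h1, h2⟩
  have hkey := NA3.key n P Q hPmono hconv k s hk.1 hk.2 hsn
  have hkey' : NA3.LL P Q k k ≤ (Q (k-1) - Q k) * a + (P k - P (k-1)) * b := by
    rw [ha, hb]
    simpa [NA3.LL] using hkey
  have hq1 : 1 ≤ Q (k-1) - Q k := NA2.q_pos n Q hQmono k hk.1 hk.2
  have hp1 : 1 ≤ P k - P (k-1) := NA2.p_pos n P hPmono k hk.1 hk.2
  have hai : a = (i:ℤ)+1 ∧ b = (j:ℤ)+1 := by
    rcases hia with rfl | rfl <;> rcases hjb with rfl | rfl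
    · exfalso; nlinarith [hleZ, hkey']
    · exfalso; nlinarith [hleZ, hkey']
    · exfalso; nlinarith [hleZ, hkey']
    · exact ⟨rfl, rfl⟩
  obtain ⟨hai1, hbj1⟩ := hai
  have hs1 : 1 ≤ s := by
    by_contra hs0
    have : s = 0 := by omega
    rw [this, hP0] at ha
    omega
  have hsn1 : s ≤ n - 1 := by
    by_contra hsn0
    have : s = n := by omega
    rw [this, hQn] at hb
    omega
  exact ⟨s, hs1, hsn1, by omega, by omega⟩

end NA8

/-- For a Newton diagram datum with `gcd(pᵢ,qᵢ) = 1`, the number of unit lattice squares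
with nonnegative-integer corner contained in `Γ₋` having at least one vertex on the
Newton boundary `Γ` equals `n - 1`. -/
theorem num_squares_meeting_boundary (n : ℕ) (hn : 1 ≤ n) (P Q : ℕ → ℤ)
    (hP0 : P 0 = 0) (hQn : Q n = 0)
    (hPmono : ∀ i < n, P i < P (i + 1))
    (hQmono : ∀ i < n, Q (i + 1) < Q i)
    (hconv : ∀ i, 1 ≤ i → i < n →
      ((Q (i - 1) - Q i : ℤ) : ℚ) / ((P i - P (i - 1) : ℤ) : ℚ) >
        ((Q i - Q (i + 1) : ℤ) : ℚ) / ((P (i + 1) - P i : ℤ) : ℚ))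
    (hgcd : ∀ i, 1 ≤ i → i ≤ n → Int.gcd (P i - P (i - 1)) (Q (i - 1) - Q i) = 1) :
    {ij : ℕ × ℕ | unitSq ij.1 ij.2 ⊆ gammaMinus n P Q ∧
        (unitSqVertices ij.1 ij.2 ∩ newtonBoundary n P Q).Nonempty}.ncard = n - 1 := by
  have hPs1 : ∀ s, 1 ≤ s → s ≤ n → 1 ≤ P s := by
    intro s h1 h2
    have := NA.P_lt n P hPmono 0 s h1 h2
    omega
  have hQs1 : ∀ s, s < n → 1 ≤ Q s := by
    intro s h1
    have := NA2.Q_lt n Q hQmono s n h1 (le_refl n)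
    omega
  have hset : {ij : ℕ × ℕ | unitSq ij.1 ij.2 ⊆ gammaMinus n P Q ∧
        (unitSqVertices ij.1 ij.2 ∩ newtonBoundary n P Q).Nonempty} =
      (fun s : ℕ => ((P s - 1).toNat, (Q s - 1).toNat)) '' (Set.Icc 1 (n-1)) := by
    ext ⟨i, j⟩
    simp only [Set.mem_setOf_eq, Set.mem_image, Set.mem_Icc]
    constructor
    · rintro ⟨hsq, hv⟩
      obtain ⟨s, hs1, hsn1, hi, hj⟩ :=
        NA8.partB n P Q hn hP0 hQn hPmono hQmono hconv hgcd i j hsq hv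
      refine ⟨s, ⟨hs1, hsn1⟩, ?_⟩
      rw [← hi, ← hj]
      simp
    · rintro ⟨s, ⟨hs1, hsn1⟩, heq⟩
      have hsn : s < n := by omega
      have hP : ((((P s - 1).toNat) : ℤ)) = P s - 1 :=
        Int.toNat_of_nonneg (by have := hPs1 s hs1 (by omega); omega)
      have hQ : ((((Q s - 1).toNat) : ℤ)) = Q s - 1 :=
        Int.toNat_of_nonneg (by have := hQs1 s hsn; omega)
      obtain ⟨hi, hj⟩ : (P s - 1).toNat = i ∧ (Q s - 1).toNat = j := by
        rw [Prod.mk.injEq] at heq; exact heq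
      have hiz : (i : ℤ) = P s - 1 := by rw [← hi]; exact hP
      have hjz : (j : ℤ) = Q s - 1 := by rw [← hj]; exact hQ
      constructor
      · rw [hiz, hjz]
        exact NA6.square_subset n P Q hn hP0 hQn hPmono hQmono hconv s hs1 hsn
      · refine ⟨(((P s : ℤ) : ℝ), ((Q s : ℤ) : ℝ)), ?_, ?_⟩
        · simp only [unitSqVertices, Set.mem_insert_iff, Set.mem_singleton_iff]
          right; right; right
          rw [Prod.mk.injEq]
          constructor
          · rw [hiz]; push_cast; ring
          · rw [hjz]; push_cast; ring
        · rw [newtonBoundary, Set.mem_iUnion₂]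
          exact ⟨s, Finset.mem_Icc.mpr ⟨hs1, by omega⟩, right_mem_segment ℝ _ _⟩
  rw [hset]
  have hinj : Set.InjOn (fun s : ℕ => ((P s - 1).toNat, (Q s - 1).toNat)) (Set.Icc 1 (n-1)) := by
    rintro s ⟨hs1, hs2⟩ t ⟨ht1, ht2⟩ h
    simp only [Prod.mk.injEq] at h
    have hPs : (P s - 1).toNat = (P t - 1).toNat := h.1
    have hs' : P s = P t := by
      have h1 : ((P s - 1).toNat : ℤ) = P s - 1 :=
        Int.toNat_of_nonneg (by have := hPs1 s hs1 (by omega); omega)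
      have h2 : ((P t - 1).toNat : ℤ) = P t - 1 :=
        Int.toNat_of_nonneg (by have := hPs1 t ht1 (by omega); omega)
      omega
    rcases lt_trichotomy s t with hlt | heq | hlt
    · exact absurd hs' (NA.P_lt n P hPmono s t hlt (by omega)).ne
    · exact heq
    · exact absurd hs'.symm (NA.P_lt n P hPmono t s hlt (by omega)).ne
  rw [Set.ncard_image_of_injOn hinj, ← Finset.coe_Icc, Set.ncard_coe_finset, Nat.card_Icc]
  omega
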